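/- Fix an integer p ≥ 1, μ ∈ ℝ^p, a positive definite p×p matrix Σ, λ ∈ ℝ^p, and y ∈ ℝ^p, and set A = λ^⊤ Σ^{-1/2}(y−μ). Then the skew-slash density converges to the skew-normal density as the tail parameter tends to infinity: lim_{ν → ∞} 2ν ∫_0^1 u^{ν−1} φ_p(y; μ, u^{-1}Σ) Φ(u^{1/2} A) du = 2 φ_p(y; μ, Σ) Φ(A). -/

import Mathlib

open MeasureTheory Matrix Real Filter Topology

/-- Multivariate normal density `φ_k(y; μ, S)`. -/
noncomputable def mvnPdf {k : Type*} [Fintype k] [DecidableEq k]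
    (μ : k → ℝ) (S : Matrix k k ℝ) (y : k → ℝ) : ℝ :=
  (2 * Real.pi) ^ (-(Fintype.card k : ℝ) / 2) * S.det ^ (-(1 : ℝ) / 2) *
    Real.exp (-((y - μ) ⬝ᵥ (S⁻¹ *ᵥ (y - μ))) / 2)

/-- Standard univariate normal cumulative distribution function `Φ`. -/
noncomputable def stdCDF (x : ℝ) : ℝ :=
  ∫ t in Set.Iic x, (Real.sqrt (2 * Real.pi))⁻¹ * Real.exp (-t ^ 2 / 2)

/-- Inverse of the positive definite square root, `S^{-1/2}`. -/
noncomputable def invSqrt {k : Type*} [Fintype k] [DecidableEq k]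
    {S : Matrix k k ℝ} (hS : S.PosDef) : Matrix k k ℝ :=
  (hS.isHermitian.eigenvectorUnitary.1 *
    diagonal ((↑) ∘ (√·) ∘ hS.isHermitian.eigenvalues) *
    (star hS.isHermitian.eigenvectorUnitary : Matrix k k ℝ))⁻¹

lemma integrable_gauss :
    Integrable (fun t : ℝ => (Real.sqrt (2 * Real.pi))⁻¹ * Real.exp (-t ^ 2 / 2)) := by
  have h : (fun t : ℝ => (Real.sqrt (2 * Real.pi))⁻¹ * Real.exp (-t ^ 2 / 2))
      = fun t : ℝ => (Real.sqrt (2 * Real.pi))⁻¹ * Real.exp (-(1/2 : ℝ) * t ^ 2) := by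
    funext t; ring_nf
  rw [h]
  exact (integrable_exp_neg_mul_sq (by norm_num)).const_mul _

lemma gauss_nonneg (t : ℝ) : 0 ≤ (Real.sqrt (2 * Real.pi))⁻¹ * Real.exp (-t ^ 2 / 2) := by
  positivity

lemma stdCDF_nonneg (x : ℝ) : 0 ≤ stdCDF x :=
  integral_nonneg fun t => gauss_nonneg t

lemma stdCDF_le_one (x : ℝ) : stdCDF x ≤ 1 := by
  have h1 : stdCDF x ≤ ∫ t : ℝ, (Real.sqrt (2 * Real.pi))⁻¹ * Real.exp (-t ^ 2 / 2) :=
    setIntegral_le_integral integrable_gauss (Filter.Eventually.of_forall gauss_nonneg)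
  have h2 : (∫ t : ℝ, (Real.sqrt (2 * Real.pi))⁻¹ * Real.exp (-t ^ 2 / 2)) = 1 := by
    rw [integral_const_mul]
    have h : (fun t : ℝ => Real.exp (-t ^ 2 / 2)) = fun t : ℝ => Real.exp (-(1/2 : ℝ) * t ^ 2) := by
      funext t; ring_nf
    rw [h, integral_gaussian, show Real.pi / (1/2 : ℝ) = 2 * Real.pi by ring]
    exact inv_mul_cancel₀ (Real.sqrt_ne_zero'.mpr (by positivity))
  linarith

lemma continuous_stdCDF : Continuous stdCDF := by
  have : LipschitzWith ⟨(Real.sqrt (2 * Real.pi))⁻¹, by positivity⟩ stdCDF := by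
    apply LipschitzWith.of_dist_le_mul
    intro a b
    have hsub := intervalIntegral.integral_Iic_sub_Iic (f := fun t : ℝ =>
        (Real.sqrt (2 * Real.pi))⁻¹ * Real.exp (-t ^ 2 / 2)) (μ := volume)
        integrable_gauss.integrableOn integrable_gauss.integrableOn (a := b) (b := a)
    have : dist (stdCDF a) (stdCDF b) = ‖∫ t in b..a,
        (Real.sqrt (2 * Real.pi))⁻¹ * Real.exp (-t ^ 2 / 2)‖ := by
      rw [Real.dist_eq, ← hsub]; rfl
    rw [this]
    have hb := intervalIntegral.norm_integral_le_of_norm_le_const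
      (C := (Real.sqrt (2 * Real.pi))⁻¹) (a := b) (b := a)
      (f := fun t : ℝ => (Real.sqrt (2 * Real.pi))⁻¹ * Real.exp (-t ^ 2 / 2)) ?_
    · calc _ ≤ (Real.sqrt (2 * Real.pi))⁻¹ * |a - b| := hb
        _ = _ := by rw [Real.dist_eq]; rfl
    · intro t _
      rw [Real.norm_eq_abs, abs_of_nonneg (gauss_nonneg t)]
      have h1 : Real.exp (-t ^ 2 / 2) ≤ 1 := by
        rw [← Real.exp_zero]
        exact Real.exp_le_exp.mpr (by nlinarith [sq_nonneg t])
      nlinarith [inv_nonneg.mpr (Real.sqrt_nonneg (2 * Real.pi))]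
  exact this.continuous

-- peak function convergence pieces
lemma peak_nonneg : ∀ᶠ ν : ℝ in atTop, ∀ u ∈ Set.Ioo (0:ℝ) 1, 0 ≤ ν * u ^ (ν - 1) := by
  filter_upwards [eventually_ge_atTop (0:ℝ)] with ν hν u hu
  exact mul_nonneg hν (Real.rpow_nonneg hu.1.le _)

lemma peak_tendsto_zero {r : ℝ} (hr0 : 0 < r) (hr1 : r < 1) :
    Tendsto (fun ν : ℝ => ν * r ^ (ν - 1)) atTop (𝓝 0) := by
  set b : ℝ := -Real.log r with hb
  have hbpos : 0 < b := by
    simp only [hb, neg_pos]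
    exact Real.log_neg hr0 hr1
  have key := (tendsto_rpow_mul_exp_neg_mul_atTop_nhds_zero 1 b hbpos).const_mul (Real.exp b)
  rw [mul_zero] at key
  apply key.congr
  intro ν
  rw [Real.rpow_def_of_pos hr0, Real.rpow_one]
  rw [show Real.log r * (ν - 1) = -b * ν + b by simp [hb]; ring, Real.exp_add]
  ring

lemma peak_uniform : ∀ u : Set ℝ, IsOpen u → (1:ℝ) ∈ u →
    TendstoUniformlyOn (fun (ν : ℝ) (x : ℝ) => ν * x ^ (ν - 1)) 0 atTop (Set.Ioo (0:ℝ) 1 \ u) := by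
  intro v hv h1v
  obtain ⟨δ, hδ, hball⟩ := Metric.isOpen_iff.mp hv 1 h1v
  set r : ℝ := max (1 - δ) (1/2) with hrdef
  have hr0 : 0 < r := lt_of_lt_of_le (by norm_num) (le_max_right _ _)
  have hr1 : r < 1 := max_lt (by linarith) (by norm_num)
  rw [Metric.tendstoUniformlyOn_iff]
  intro ε εpos
  have h0 := peak_tendsto_zero hr0 hr1
  rw [Metric.tendsto_nhds] at h0
  filter_upwards [eventually_ge_atTop (1:ℝ), h0 ε εpos] with ν hν1 hνε x hx
  obtain ⟨⟨hx0, hx1⟩, hxv⟩ := hx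
  have hxr : x ≤ r := by
    have : x ∉ Metric.ball (1:ℝ) δ := fun h => hxv (hball h)
    rw [Metric.mem_ball, Real.dist_eq] at this
    push_neg at this
    have : 1 - x ≥ δ := by
      rcases abs_cases (x - 1) with ⟨h1, _⟩ | ⟨h1, _⟩ <;> linarith
    exact le_trans (by linarith) (le_max_left _ _)
  have hb1 : ν * x ^ (ν - 1) ≤ ν * r ^ (ν - 1) :=
    mul_le_mul_of_nonneg_left (Real.rpow_le_rpow hx0.le hxr (by linarith)) (by linarith)
  have hb0 : 0 ≤ ν * x ^ (ν - 1) := mul_nonneg (by linarith) (Real.rpow_nonneg hx0.le _)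
  rw [Real.dist_eq] at hνε ⊢
  rw [Pi.zero_apply, abs_sub_comm, sub_zero, abs_of_nonneg hb0]
  calc ν * x ^ (ν - 1) ≤ ν * r ^ (ν - 1) := hb1
    _ ≤ |ν * r ^ (ν - 1) - 0| := by rw [sub_zero]; exact le_abs_self _
    _ < ε := hνε

lemma peak_integral_tendsto :
    Tendsto (fun ν : ℝ => ∫ u in Set.Ioo (1/2 : ℝ) 1, ν * u ^ (ν - 1)) atTop (𝓝 1) := by
  have hlim : Tendsto (fun ν : ℝ => 1 - (1/2 : ℝ) ^ ν) atTop (𝓝 1) := by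
    have := (tendsto_rpow_atTop_of_base_lt_one (1/2 : ℝ) (by norm_num) (by norm_num)).const_sub 1
    simpa using this
  apply hlim.congr'
  filter_upwards [eventually_ge_atTop (1:ℝ)] with ν hν
  have hν0 : (0:ℝ) < ν := by linarith
  rw [MeasureTheory.integral_const_mul]
  have h1 : (∫ u in Set.Ioo (1/2 : ℝ) 1, u ^ (ν - 1)) = ∫ u in (1/2 : ℝ)..1, u ^ (ν - 1) := by
    rw [intervalIntegral.integral_of_le (by norm_num), MeasureTheory.integral_Ioc_eq_integral_Ioo]
  rw [h1, integral_rpow (Or.inl (by linarith)), sub_add_cancel, Real.one_rpow]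
  field_simp

/-- the skew-slash density converges to the skew-normal density as the tail
parameter `ν → ∞`. -/
theorem skew_slash_tendsto_skew_normal
    {p : ℕ} (hp : 1 ≤ p) (μ lam : Fin p → ℝ)
    (S : Matrix (Fin p) (Fin p) ℝ) (hS : S.PosDef) (y : Fin p → ℝ) :
    Tendsto
      (fun ν : ℝ => 2 * ν * ∫ u in Set.Ioo (0 : ℝ) 1,
        u ^ (ν - 1) * mvnPdf μ (u⁻¹ • S) y *
          stdCDF (Real.sqrt u * (lam ⬝ᵥ (invSqrt hS *ᵥ (y - μ)))))
      atTop
      (nhds (2 * mvnPdf μ S y * stdCDF (lam ⬝ᵥ (invSqrt hS *ᵥ (y - μ))))) := by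
  set A : ℝ := lam ⬝ᵥ (invSqrt hS *ᵥ (y - μ)) with hA
  set d : ℝ := S.det with hd
  have hd0 : 0 < d := hS.det_pos
  set Q : ℝ := (y - μ) ⬝ᵥ (S⁻¹ *ᵥ (y - μ)) with hQdef
  have hQ0 : 0 ≤ Q := by
    have h := hS.inv.posSemidef.dotProduct_mulVec_nonneg (y - μ)
    rwa [star_trivial] at h
  set g : ℝ → ℝ := fun u => mvnPdf μ (u⁻¹ • S) y * stdCDF (Real.sqrt u * A) with hg
  set G : ℝ → ℝ := fun u =>
    (2 * Real.pi) ^ (-(p : ℝ) / 2) * ((u⁻¹) ^ p * d) ^ (-(1 : ℝ) / 2) *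
      Real.exp (-(u * Q) / 2) * stdCDF (Real.sqrt u * A) with hG
  -- inverse of scaled matrix
  have hInv : ∀ u : ℝ, 0 < u → (u⁻¹ • S)⁻¹ = u • S⁻¹ := by
    intro u hu
    apply Matrix.inv_eq_right_inv
    rw [Matrix.smul_mul, Matrix.mul_smul, Matrix.mul_nonsing_inv _ (isUnit_iff_ne_zero.mpr hS.det_pos.ne'),
      smul_smul, inv_mul_cancel₀ hu.ne', one_smul]
  have hgG : ∀ u : ℝ, 0 < u → g u = G u := by
    intro u hu
    have hdet : (u⁻¹ • S).det = (u⁻¹) ^ p * d := by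
      rw [Matrix.det_smul, Fintype.card_fin, hd]
    have hquad : (y - μ) ⬝ᵥ ((u⁻¹ • S)⁻¹ *ᵥ (y - μ)) = u * Q := by
      rw [hInv u hu, Matrix.smul_mulVec, dotProduct_smul, smul_eq_mul, hQdef]
    simp only [hg, hG, mvnPdf, hdet, hquad, Fintype.card_fin]
  -- value of G at 1
  have hG1 : G 1 = mvnPdf μ S y * stdCDF A := by
    simp only [hG, mvnPdf, inv_one, one_pow, one_mul, Real.sqrt_one, Fintype.card_fin, hd, hQdef]
  -- continuity of G at 1
  have hGc : ContinuousAt G 1 := by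
    have h1 : ContinuousAt (fun u : ℝ => ((u⁻¹) ^ p * d) ^ (-(1 : ℝ) / 2)) 1 := by
      apply ContinuousAt.rpow_const
      · exact (((continuousAt_inv₀ one_ne_zero).pow p).mul continuousAt_const)
      · left; simp [hd0.ne']
    have h2 : ContinuousAt (fun u : ℝ => Real.exp (-(u * Q) / 2)) 1 := by fun_prop
    have h3 : ContinuousAt (fun u : ℝ => stdCDF (Real.sqrt u * A)) 1 :=
      (continuous_stdCDF.comp ((Real.continuous_sqrt).mul continuous_const)).continuousAt
    exact ((continuousAt_const.mul h1).mul h2).mul h3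
  -- continuity of G on Ioo 0 1
  have hGon : ContinuousOn G (Set.Ioo (0:ℝ) 1) := by
    have h1 : ContinuousOn (fun u : ℝ => ((u⁻¹) ^ p * d) ^ (-(1 : ℝ) / 2)) (Set.Ioo (0:ℝ) 1) := by
      apply ContinuousOn.rpow_const
      · exact ((continuousOn_id.inv₀ fun x hx => hx.1.ne').pow p).mul continuousOn_const
      · intro x hx
        left
        have : 0 < (x⁻¹) ^ p * d :=
          mul_pos (pow_pos (inv_pos.mpr hx.1) p) hd0
        exact this.ne'
    have h2 : ContinuousOn (fun u : ℝ => Real.exp (-(u * Q) / 2)) (Set.Ioo (0:ℝ) 1) := by fun_prop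
    have h3 : ContinuousOn (fun u : ℝ => stdCDF (Real.sqrt u * A)) (Set.Ioo (0:ℝ) 1) :=
      ((continuous_stdCDF.comp ((Real.continuous_sqrt).mul continuous_const))).continuousOn
    exact ((continuousOn_const.mul h1).mul h2).mul h3
  -- bound on G on Ioo 0 1
  set M : ℝ := (2 * Real.pi) ^ (-(p : ℝ) / 2) * d ^ (-(1 : ℝ) / 2) with hM
  have hGbd : ∀ u ∈ Set.Ioo (0:ℝ) 1, ‖G u‖ ≤ M := by
    intro u hu
    have hC1 : (0:ℝ) ≤ (2 * Real.pi) ^ (-(p : ℝ) / 2) := Real.rpow_nonneg (by positivity) _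
    have hbase : d ≤ (u⁻¹) ^ p * d := by
      have h1 : (1:ℝ) ≤ u⁻¹ := (one_le_inv_iff₀).mpr ⟨hu.1, hu.2.le⟩
      nlinarith [one_le_pow₀ h1 (n := p), hd0]
    have hB : ((u⁻¹) ^ p * d) ^ (-(1 : ℝ) / 2) ≤ d ^ (-(1 : ℝ) / 2) :=
      Real.rpow_le_rpow_of_nonpos hd0 hbase (by norm_num)
    have hBnn : (0:ℝ) ≤ ((u⁻¹) ^ p * d) ^ (-(1 : ℝ) / 2) :=
      Real.rpow_nonneg (mul_nonneg (pow_nonneg (inv_nonneg.mpr hu.1.le) p) hd0.le) _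
    have hE : Real.exp (-(u * Q) / 2) ≤ 1 := by
      rw [← Real.exp_zero]
      apply Real.exp_le_exp.mpr
      nlinarith [mul_nonneg hu.1.le hQ0]
    have hEnn : (0:ℝ) ≤ Real.exp (-(u * Q) / 2) := (Real.exp_pos _).le
    have hS1 : stdCDF (Real.sqrt u * A) ≤ 1 := stdCDF_le_one _
    have hSnn : (0:ℝ) ≤ stdCDF (Real.sqrt u * A) := stdCDF_nonneg _
    have s1 : (2 * Real.pi) ^ (-(p : ℝ) / 2) * ((u⁻¹) ^ p * d) ^ (-(1 : ℝ) / 2) ≤ M := by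
      rw [hM]; exact mul_le_mul_of_nonneg_left hB hC1
    have s3 : Real.exp (-(u * Q) / 2) * stdCDF (Real.sqrt u * A) ≤ 1 := by
      nlinarith
    have hGnn : 0 ≤ G u := by
      simp only [hG]
      exact mul_nonneg (mul_nonneg (mul_nonneg hC1 hBnn) hEnn) hSnn
    rw [Real.norm_eq_abs, abs_of_nonneg hGnn]
    have hGval : G u = ((2 * Real.pi) ^ (-(p : ℝ) / 2) * ((u⁻¹) ^ p * d) ^ (-(1 : ℝ) / 2)) *
        (Real.exp (-(u * Q) / 2) * stdCDF (Real.sqrt u * A)) := by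
      simp only [hG]; ring
    rw [hGval]
    calc _ ≤ M * 1 := mul_le_mul s1 s3 (mul_nonneg hEnn hSnn)
            (by rw [hM]; positivity)
      _ = M := mul_one M
  -- integrability of g on Ioo 0 1
  have hGint : IntegrableOn G (Set.Ioo (0:ℝ) 1) volume := by
    constructor
    · exact hGon.aestronglyMeasurable measurableSet_Ioo
    · apply HasFiniteIntegral.restrict_of_bounded (C := M)
      · exact measure_Ioo_lt_top
      · exact (ae_restrict_iff' measurableSet_Ioo).mpr (Filter.Eventually.of_forall hGbd)
  have hmg : IntegrableOn g (Set.Ioo (0:ℝ) 1) volume :=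
    hGint.congr_fun (fun u hu => (hgG u hu.1).symm) measurableSet_Ioo
  -- limit of g at 1 within Ioo 0 1
  have hcg : Tendsto g (nhdsWithin 1 (Set.Ioo (0:ℝ) 1)) (𝓝 (mvnPdf μ S y * stdCDF A)) := by
    rw [← hG1]
    apply Tendsto.congr' _ ((hGc.tendsto).mono_left nhdsWithin_le_nhds)
    filter_upwards [self_mem_nhdsWithin] with u hu
    exact (hgG u hu.1).symm
  have hts : Set.Ioo (1/2:ℝ) 1 ⊆ Set.Ioo (0:ℝ) 1 := fun x hx => ⟨by linarith [hx.1], hx.2⟩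
  have h'ts : Set.Ioo (1/2:ℝ) 1 ∈ nhdsWithin 1 (Set.Ioo (0:ℝ) 1) :=
    mem_nhdsWithin.mpr ⟨Set.Ioi (1/2:ℝ), isOpen_Ioi, by norm_num, fun x hx => ⟨hx.1, hx.2.2⟩⟩
  have h't : volume (Set.Ioo (1/2:ℝ) 1) ≠ ⊤ := measure_Ioo_lt_top.ne
  have h'iφ : ∀ᶠ ν : ℝ in atTop, AEStronglyMeasurable (fun u : ℝ => ν * u ^ (ν - 1))
      (volume.restrict (Set.Ioo (0:ℝ) 1)) := by
    apply Filter.Eventually.of_forall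
    intro ν
    apply ContinuousOn.aestronglyMeasurable _ measurableSet_Ioo
    exact continuousOn_const.mul
      (ContinuousOn.rpow_const continuousOn_id (fun x hx => Or.inl hx.1.ne'))
  have key := tendsto_setIntegral_peak_smul_of_integrableOn_of_tendsto
      (μ := volume) measurableSet_Ioo measurableSet_Ioo hts h'ts h't
      peak_nonneg peak_uniform peak_integral_tendsto h'iφ hmg hcg
  have key2 := key.const_mul (2:ℝ)
  have htarget : (2:ℝ) * (mvnPdf μ S y * stdCDF A) = 2 * mvnPdf μ S y * stdCDF A := by ring
  rw [← htarget]
  apply key2.congr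
  intro ν
  have hint : (∫ u in Set.Ioo (0:ℝ) 1, (ν * u ^ (ν - 1)) • g u)
      = ν * ∫ u in Set.Ioo (0:ℝ) 1,
          u ^ (ν - 1) * mvnPdf μ (u⁻¹ • S) y * stdCDF (Real.sqrt u * A) := by
    rw [← MeasureTheory.integral_const_mul]
    apply MeasureTheory.integral_congr_ae
    apply Filter.Eventually.of_forall
    intro u
    simp only [smul_eq_mul, hg]
    ring
  rw [hint]
  ring
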